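/- Let m ≥ 1 be a natural number. For all real a, x and every natural number n, dⁿ/dxⁿ e^{a x^m} = H_n^{(m)}(a·C(m,1)·x^{m−1}, a·C(m,2)·x^{m−2}, …, a·C(m,m)·x⁰) · e^{a x^m}, where H_n^{(m)} is the m-variable Hermite–Kampé de Fériet polynomial. -/

import Mathlib

open Finset

/-- The `(m+1)`-variable Hermite–Kampé de Fériet polynomials:
`hermiteKdF m n ξ` is `H_n^{(m+1)}(ξ 0, ξ 1, …, ξ m)`, defined recursively by
`H_n^{(1)}(ξ₁) = ξ₁ ^ n` and
`H_n^{(m)}(ξ₁, …, ξ_m) = n! Σ_{k=0}^{⌊n/m⌋} ξ_m^k / ((n−mk)! k!) · H_{n−mk}^{(m−1)}(ξ₁, …, ξ_{m−1})`. -/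
noncomputable def hermiteKdF : ℕ → ℕ → (ℕ → ℝ) → ℝ
  | 0, n, ξ => ξ 0 ^ n
  | m + 1, n, ξ =>
      (n.factorial : ℝ) * ∑ k ∈ Finset.range (n / (m + 2) + 1),
        ξ (m + 1) ^ k / ((n - (m + 2) * k).factorial * k.factorial) *
          hermiteKdF m (n - (m + 2) * k) ξ

lemma term_id (M n j i : ℕ) (c Hv : ℝ) (hn : n = j + (M+2) * (i+1)) :
    (((n+1).factorial : ℕ) : ℝ) * (c^(i+1) / (((j+1).factorial : ℕ) * ((i+1).factorial : ℕ)) * Hv)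
    = ((n.factorial : ℕ):ℝ) * (c^(i+1) / ((j.factorial : ℕ) * ((i+1).factorial : ℕ)) * Hv)
    + ((n.factorial : ℕ):ℝ) * (c^i / (((j+(M+2)).factorial : ℕ) * ((i.factorial : ℕ)))
        * (((M:ℝ)+2) * c * (((j+(M+2)).descFactorial (M+1) : ℕ) : ℝ) * Hv)) := by
  have hdesc : (((j+(M+2)).descFactorial (M+1) : ℕ) : ℝ) * (((j+1).factorial : ℕ) : ℝ)
      = (((j+(M+2)).factorial : ℕ) : ℝ) := by
    have h := Nat.factorial_mul_descFactorial (n := j+(M+2)) (k := M+1) (by omega)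
    have h2 : j + (M+2) - (M+1) = j + 1 := by omega
    rw [h2] at h
    exact_mod_cast (mul_comm _ _).trans h
  have hcast : ((n:ℝ)) = (j:ℝ) + ((M:ℝ)+2) * ((i:ℝ)+1) := by rw [hn]; push_cast; ring
  have hfj : ((j.factorial : ℕ):ℝ) ≠ 0 := Nat.cast_ne_zero.2 j.factorial_ne_zero
  have hfj1 : (((j+1).factorial : ℕ):ℝ) ≠ 0 := Nat.cast_ne_zero.2 (j+1).factorial_ne_zero
  have hfi : ((i.factorial : ℕ):ℝ) ≠ 0 := Nat.cast_ne_zero.2 i.factorial_ne_zero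
  have hfjw : (((j+(M+2)).factorial : ℕ):ℝ) ≠ 0 := Nat.cast_ne_zero.2 (j+(M+2)).factorial_ne_zero
  rw [show (((j+(M+2)).descFactorial (M+1) : ℕ) : ℝ) = (((j+(M+2)).factorial : ℕ) : ℝ) / (((j+1).factorial : ℕ) : ℝ) from by rw [eq_div_iff hfj1]; exact hdesc]
  simp only [Nat.factorial_succ]
  push_cast
  field_simp
  rw [hcast]
  ring

lemma claim3 (M n : ℕ) (ξ : ℕ → ℝ) :
    (n.factorial : ℝ) * ∑ k ∈ Finset.range (n / (M + 2) + 1),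
      (k : ℝ) * ξ (M+1) ^ (k-1) * ((((M+1:ℕ):ℝ)+2) * ξ (M+1+1)) /
          (((n - (M+2)*k).factorial : ℕ) * ((k.factorial : ℕ):ℝ)) *
        hermiteKdF M (n - (M+2)*k) ξ
    = (((M+1:ℕ):ℝ)+2) * ξ (M+1+1) * ((n.descFactorial (M+1+1) : ℕ) : ℝ) *
        hermiteKdF (M+1) (n - (M+1+1)) ξ := by
  rcases lt_or_ge n (M+2) with hlt | hge
  · have hq : n / (M+2) = 0 := Nat.div_eq_of_lt hlt
    have hdesc : n.descFactorial (M+1+1) = 0 := Nat.descFactorial_eq_zero_iff_lt.2 (by omega)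
    rw [hq, hdesc]
    simp
  · have hq : n / (M+2) = (n - (M+2))/(M+2) + 1 := Nat.div_eq_sub_div (by omega) hge
    have hfac : ((n.descFactorial (M+2) : ℕ) : ℝ) * (((n - (M+2)).factorial : ℕ) : ℝ)
        = ((n.factorial : ℕ) : ℝ) := by
      have h := Nat.factorial_mul_descFactorial (n := n) (k := M+2) hge
      exact_mod_cast (mul_comm _ _).trans h
    simp only [show M+1+1 = M+2 from rfl]
    rw [hq, Finset.sum_range_succ']
    simp only [Nat.cast_zero, zero_mul, zero_div, add_zero, hermiteKdF]
    simp only [Finset.mul_sum]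
    refine Finset.sum_congr rfl fun i hi => ?_
    have hi' : i ≤ (n - (M+2))/(M+2) := Nat.lt_succ_iff.mp (Finset.mem_range.mp hi)
    have hle : (M+2) * (i+1) ≤ n := by
      have h1 : (M+2) * i ≤ n - (M+2) := by
        calc (M+2) * i ≤ (M+2) * ((n - (M+2))/(M+2)) := Nat.mul_le_mul_left _ hi'
        _ ≤ n - (M+2) := Nat.mul_div_le _ _
      have h2 : (M+2)*(i+1) = (M+2)*i + (M+2) := by ring
      omega
    have h1 : n - (M+2)*(i+1) = n - (M+2) - (M+2)*i := by
      have : (M+2)*(i+1) = (M+2) + (M+2)*i := by ring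
      omega
    rw [h1]
    have hfi : ((i.factorial : ℕ):ℝ) ≠ 0 := Nat.cast_ne_zero.2 i.factorial_ne_zero
    have hff : (((n - (M+2) - (M+2)*i).factorial : ℕ):ℝ) ≠ 0 := Nat.cast_ne_zero.2 (Nat.factorial_ne_zero _)
    rw [Nat.factorial_succ]
    push_cast
    rw [← hfac]
    field_simp

lemma claim1 (M n : ℕ) (ξ : ℕ → ℝ) :
    ((n.factorial : ℕ) : ℝ) * ∑ k ∈ Finset.range (n / (M + 2) + 1),
        ξ (M+1) ^ k / (((n - (M+2)*k).factorial : ℕ) * ((k.factorial : ℕ):ℝ)) *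
          hermiteKdF M ((n - (M+2)*k) + 1) ξ
      + ((n.factorial : ℕ) : ℝ) * ∑ k ∈ Finset.range (n / (M + 2) + 1),
        ξ (M+1) ^ k / (((n - (M+2)*k).factorial : ℕ) * ((k.factorial : ℕ):ℝ)) *
          (((M:ℝ) + 2) * ξ (M+1) * (((n - (M+2)*k).descFactorial (M+1) : ℕ) : ℝ) *
            hermiteKdF M ((n - (M+2)*k) - (M+1)) ξ)
    = hermiteKdF (M+1) (n+1) ξ := by
  simp only [hermiteKdF]
  have hF0 : (((n+1).factorial : ℕ) : ℝ) *
      (ξ (M+1) ^ 0 / (((n + 1 - (M+2)*0).factorial : ℕ) * (((0:ℕ).factorial : ℕ):ℝ)) *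
        hermiteKdF M (n + 1 - (M+2)*0) ξ)
      = ((n.factorial : ℕ) : ℝ) *
      (ξ (M+1) ^ 0 / (((n - (M+2)*0).factorial : ℕ) * (((0:ℕ).factorial : ℕ):ℝ)) *
        hermiteKdF M ((n - (M+2)*0) + 1) ξ) := by
    simp only [Nat.mul_zero, Nat.sub_zero, pow_zero, Nat.factorial_zero]
    rw [Nat.factorial_succ]
    have : ((n.factorial : ℕ):ℝ) ≠ 0 := Nat.cast_ne_zero.2 n.factorial_ne_zero
    push_cast
    field_simp
  have hterm : ∀ i, (M+2) * (i+1) ≤ n →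
      (((n+1).factorial : ℕ) : ℝ) *
        (ξ (M+1) ^ (i+1) / (((n + 1 - (M+2)*(i+1)).factorial : ℕ) * (((i+1).factorial : ℕ):ℝ)) *
          hermiteKdF M (n + 1 - (M+2)*(i+1)) ξ)
      = ((n.factorial : ℕ) : ℝ) *
          (ξ (M+1) ^ (i+1) / (((n - (M+2)*(i+1)).factorial : ℕ) * (((i+1).factorial : ℕ):ℝ)) *
            hermiteKdF M ((n - (M+2)*(i+1)) + 1) ξ)
        + ((n.factorial : ℕ) : ℝ) *
          (ξ (M+1) ^ i / (((n - (M+2)*i).factorial : ℕ) * ((i.factorial : ℕ):ℝ)) *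
            (((M:ℝ) + 2) * ξ (M+1) * (((n - (M+2)*i).descFactorial (M+1) : ℕ) : ℝ) *
              hermiteKdF M ((n - (M+2)*i) - (M+1)) ξ)) := by
    intro i hle
    set j := n - (M+2)*(i+1) with hj
    have hmul : (M+2)*(i+1) = (M+2)*i + (M+2) := by ring
    have h1 : n + 1 - (M+2)*(i+1) = j + 1 := by omega
    have h2 : n - (M+2)*i = j + (M+2) := by omega
    rw [h1, h2, show j + (M+2) - (M+1) = j + 1 by omega]
    exact term_id M n j i (ξ (M+1)) (hermiteKdF M (j+1) ξ) (by omega)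
  by_cases hdvd : (M+2) ∣ (n+1)
  · have hdiv : (n+1) / (M+2) = n / (M+2) + 1 := Nat.succ_div_of_dvd hdvd
    have he' : n + 1 = (M+2) * (n / (M+2) + 1) := by
      have h := Nat.div_mul_cancel hdvd
      rw [hdiv] at h
      calc n + 1 = (n / (M+2) + 1) * (M+2) := h.symm
        _ = (M+2) * (n / (M+2) + 1) := Nat.mul_comm _ _
    rw [hdiv]
    set q := n / (M+2) with hq
    have hmulq : (M+2)*(q+1) = (M+2)*q + (M+2) := by ring
    have hwq : (M+2) * q ≤ n := by rw [hq]; exact Nat.mul_div_le n (M+2)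
    have hTq : (((n+1).factorial : ℕ) : ℝ) *
        (ξ (M+1) ^ (q+1) / (((n + 1 - (M+2)*(q+1)).factorial : ℕ) * (((q+1).factorial : ℕ):ℝ)) *
          hermiteKdF M (n + 1 - (M+2)*(q+1)) ξ)
        = ((n.factorial : ℕ) : ℝ) *
          (ξ (M+1) ^ q / (((n - (M+2)*q).factorial : ℕ) * ((q.factorial : ℕ):ℝ)) *
            (((M:ℝ) + 2) * ξ (M+1) * (((n - (M+2)*q).descFactorial (M+1) : ℕ) : ℝ) *
              hermiteKdF M ((n - (M+2)*q) - (M+1)) ξ)) := by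
      have h1 : n + 1 - (M+2)*(q+1) = 0 := by omega
      have h2 : n - (M+2)*q = M+1 := by omega
      rw [h1, h2, Nat.descFactorial_self, Nat.sub_self]
      rw [Nat.factorial_succ (n), Nat.factorial_succ q, pow_succ]
      have hfq : ((q.factorial : ℕ):ℝ) ≠ 0 := Nat.cast_ne_zero.2 q.factorial_ne_zero
      have hfM : (((M+1).factorial : ℕ):ℝ) ≠ 0 := Nat.cast_ne_zero.2 (M+1).factorial_ne_zero
      have hncast : ((n:ℝ)) + 1 = ((M:ℝ)+2) * ((q:ℝ)+1) := by
        exact_mod_cast he'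
      push_cast
      field_simp
      rw [show (n:ℝ) = ((M:ℝ)+2) * ((q:ℝ)+1) - 1 by linarith]
      ring
    simp only [Finset.mul_sum]
    conv_lhs => rw [Finset.sum_range_succ' _ q, Finset.sum_range_succ _ q]
    conv_rhs => rw [Finset.sum_range_succ' _ (q+1), Finset.sum_range_succ _ q]
    have e1 : (∑ i ∈ Finset.range q, ((n.factorial : ℕ) : ℝ) *
          (ξ (M+1) ^ (i+1) / (((n - (M+2)*(i+1)).factorial : ℕ) * (((i+1).factorial : ℕ):ℝ)) *
            hermiteKdF M ((n - (M+2)*(i+1)) + 1) ξ))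
        + (∑ i ∈ Finset.range q, ((n.factorial : ℕ) : ℝ) *
          (ξ (M+1) ^ i / (((n - (M+2)*i).factorial : ℕ) * ((i.factorial : ℕ):ℝ)) *
            (((M:ℝ) + 2) * ξ (M+1) * (((n - (M+2)*i).descFactorial (M+1) : ℕ) : ℝ) *
              hermiteKdF M ((n - (M+2)*i) - (M+1)) ξ)))
        = ∑ i ∈ Finset.range q, (((n+1).factorial : ℕ) : ℝ) *
          (ξ (M+1) ^ (i+1) / (((n + 1 - (M+2)*(i+1)).factorial : ℕ) * (((i+1).factorial : ℕ):ℝ)) *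
            hermiteKdF M (n + 1 - (M+2)*(i+1)) ξ) := by
      rw [← Finset.sum_add_distrib]
      refine Finset.sum_congr rfl fun i hi => ?_
      have hib : i + 1 ≤ q := Finset.mem_range.mp hi
      have hle : (M+2) * (i+1) ≤ n :=
        le_trans (Nat.mul_le_mul_left _ hib) hwq
      exact (hterm i hle).symm
    linarith [e1, hF0, hTq]
  · have hdiv : (n+1) / (M+2) = n / (M+2) := Nat.succ_div_of_not_dvd hdvd
    rw [hdiv]
    set q := n / (M+2) with hq
    have hmulq : (M+2)*(q+1) = (M+2)*q + (M+2) := by ring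
    have hwq : (M+2) * q ≤ n := by rw [hq]; exact Nat.mul_div_le n (M+2)
    have hmd := Nat.mod_add_div n (M+2)
    rw [← hq] at hmd
    have hne : n % (M+2) ≠ M+1 := fun hc => hdvd ⟨q+1, by omega⟩
    have hmlt : n % (M+2) < M+2 := Nat.mod_lt n (by omega)
    have hdesc0 : (n - (M+2)*q).descFactorial (M+1) = 0 :=
      Nat.descFactorial_eq_zero_iff_lt.2 (by omega)
    simp only [Finset.mul_sum]
    conv_lhs => rw [Finset.sum_range_succ' _ q, Finset.sum_range_succ _ q]
    conv_rhs => rw [Finset.sum_range_succ' _ q]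
    have hGq : ((n.factorial : ℕ) : ℝ) *
        (ξ (M+1) ^ q / (((n - (M+2)*q).factorial : ℕ) * ((q.factorial : ℕ):ℝ)) *
          (((M:ℝ) + 2) * ξ (M+1) * (((n - (M+2)*q).descFactorial (M+1) : ℕ) : ℝ) *
            hermiteKdF M ((n - (M+2)*q) - (M+1)) ξ)) = 0 := by
      rw [hdesc0]
      simp
    have e1 : (∑ i ∈ Finset.range q, ((n.factorial : ℕ) : ℝ) *
          (ξ (M+1) ^ (i+1) / (((n - (M+2)*(i+1)).factorial : ℕ) * (((i+1).factorial : ℕ):ℝ)) *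
            hermiteKdF M ((n - (M+2)*(i+1)) + 1) ξ))
        + (∑ i ∈ Finset.range q, ((n.factorial : ℕ) : ℝ) *
          (ξ (M+1) ^ i / (((n - (M+2)*i).factorial : ℕ) * ((i.factorial : ℕ):ℝ)) *
            (((M:ℝ) + 2) * ξ (M+1) * (((n - (M+2)*i).descFactorial (M+1) : ℕ) : ℝ) *
              hermiteKdF M ((n - (M+2)*i) - (M+1)) ξ)))
        = ∑ i ∈ Finset.range q, (((n+1).factorial : ℕ) : ℝ) *
          (ξ (M+1) ^ (i+1) / (((n + 1 - (M+2)*(i+1)).factorial : ℕ) * (((i+1).factorial : ℕ):ℝ)) *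
            hermiteKdF M (n + 1 - (M+2)*(i+1)) ξ) := by
      rw [← Finset.sum_add_distrib]
      refine Finset.sum_congr rfl fun i hi => ?_
      have hib : i + 1 ≤ q := Finset.mem_range.mp hi
      have hle : (M+2) * (i+1) ≤ n :=
        le_trans (Nat.mul_le_mul_left _ hib) hwq
      exact (hterm i hle).symm
    linarith [e1, hF0, hGq]

lemma claim2 (M n : ℕ) (ξ : ℕ → ℝ) :
    ((n.factorial : ℕ) : ℝ) * ∑ k ∈ Finset.range (n / (M + 2) + 1),
        ξ (M+1) ^ k / (((n - (M+2)*k).factorial : ℕ) * ((k.factorial : ℕ):ℝ)) *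
          (ξ 0 * hermiteKdF M (n - (M+2)*k) ξ)
    = ξ 0 * hermiteKdF (M+1) n ξ := by
  simp only [hermiteKdF, Finset.mul_sum]
  exact Finset.sum_congr rfl fun k _ => by ring

lemma step_algebra (M n : ℕ) (ξ : ℕ → ℝ) :
    ((n.factorial : ℕ) : ℝ) * ∑ k ∈ Finset.range (n / (M + 2) + 1),
      ((k : ℝ) * ξ (M+1) ^ (k-1) * ((((M+1:ℕ):ℝ)+2) * ξ (M+1+1)) /
          (((n - (M+2)*k).factorial : ℕ) * ((k.factorial : ℕ):ℝ)) * hermiteKdF M (n - (M+2)*k) ξ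
        + ξ (M+1) ^ k / (((n - (M+2)*k).factorial : ℕ) * ((k.factorial : ℕ):ℝ)) *
          (hermiteKdF M ((n - (M+2)*k) + 1) ξ - ξ 0 * hermiteKdF M (n - (M+2)*k) ξ
            + ((M:ℝ) + 2) * ξ (M+1) * (((n - (M+2)*k).descFactorial (M+1) : ℕ) : ℝ) *
              hermiteKdF M ((n - (M+2)*k) - (M+1)) ξ))
    = hermiteKdF (M+1) (n + 1) ξ - ξ 0 * hermiteKdF (M+1) n ξ
      + (((M+1:ℕ):ℝ) + 2) * ξ (M+1+1) * ((n.descFactorial (M+1+1) : ℕ) : ℝ) *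
          hermiteKdF (M+1) (n - (M+1+1)) ξ := by
  have e : ∑ k ∈ Finset.range (n / (M + 2) + 1),
      ((k : ℝ) * ξ (M+1) ^ (k-1) * ((((M+1:ℕ):ℝ)+2) * ξ (M+1+1)) /
          (((n - (M+2)*k).factorial : ℕ) * ((k.factorial : ℕ):ℝ)) * hermiteKdF M (n - (M+2)*k) ξ
        + ξ (M+1) ^ k / (((n - (M+2)*k).factorial : ℕ) * ((k.factorial : ℕ):ℝ)) *
          (hermiteKdF M ((n - (M+2)*k) + 1) ξ - ξ 0 * hermiteKdF M (n - (M+2)*k) ξ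
            + ((M:ℝ) + 2) * ξ (M+1) * (((n - (M+2)*k).descFactorial (M+1) : ℕ) : ℝ) *
              hermiteKdF M ((n - (M+2)*k) - (M+1)) ξ))
      = (∑ k ∈ Finset.range (n / (M + 2) + 1),
          (k : ℝ) * ξ (M+1) ^ (k-1) * ((((M+1:ℕ):ℝ)+2) * ξ (M+1+1)) /
            (((n - (M+2)*k).factorial : ℕ) * ((k.factorial : ℕ):ℝ)) * hermiteKdF M (n - (M+2)*k) ξ)
        + ((∑ k ∈ Finset.range (n / (M + 2) + 1),
            ξ (M+1) ^ k / (((n - (M+2)*k).factorial : ℕ) * ((k.factorial : ℕ):ℝ)) *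
              hermiteKdF M ((n - (M+2)*k) + 1) ξ)
          + (∑ k ∈ Finset.range (n / (M + 2) + 1),
            ξ (M+1) ^ k / (((n - (M+2)*k).factorial : ℕ) * ((k.factorial : ℕ):ℝ)) *
              (((M:ℝ) + 2) * ξ (M+1) * (((n - (M+2)*k).descFactorial (M+1) : ℕ) : ℝ) *
                hermiteKdF M ((n - (M+2)*k) - (M+1)) ξ))
          - (∑ k ∈ Finset.range (n / (M + 2) + 1),
            ξ (M+1) ^ k / (((n - (M+2)*k).factorial : ℕ) * ((k.factorial : ℕ):ℝ)) *
              (ξ 0 * hermiteKdF M (n - (M+2)*k) ξ))) := by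
    rw [← Finset.sum_add_distrib, ← Finset.sum_sub_distrib, ← Finset.sum_add_distrib]
    exact Finset.sum_congr rfl fun k _ => by ring
  rw [e, mul_add, mul_sub, mul_add]
  rw [claim3 M n ξ, claim2 M n ξ, claim1 M n ξ]
  ring

lemma hermiteKdF_hasDerivAt : ∀ (M : ℕ) (ξ : ℝ → ℕ → ℝ) (x : ℝ),
    (∀ i, i ≤ M → HasDerivAt (fun t => ξ t i) (((i : ℝ) + 2) * ξ x (i + 1)) x) →
    ∀ n : ℕ, HasDerivAt (fun t => hermiteKdF M n (ξ t))
      (hermiteKdF M (n + 1) (ξ x) - ξ x 0 * hermiteKdF M n (ξ x)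
        + ((M : ℝ) + 2) * ξ x (M + 1) * (n.descFactorial (M + 1)) *
          hermiteKdF M (n - (M + 1)) (ξ x)) x := by
  intro M
  induction M with
  | zero =>
    intro ξ x h n
    have h0 := (h 0 le_rfl).fun_pow n
    simp only [hermiteKdF]
    refine h0.congr_deriv (Eq.symm ?_)
    simp [Nat.descFactorial]
    ring
  | succ M ih =>
    intro ξ x h n
    have hD : HasDerivAt (fun t => ξ t (M+1)) ((((M+1:ℕ):ℝ) + 2) * ξ x (M+1+1)) x :=
      h (M+1) le_rfl
    have hterm : ∀ k ∈ Finset.range (n / (M+2) + 1),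
        HasDerivAt (fun t => ξ t (M+1) ^ k /
            (((n - (M+2)*k).factorial : ℕ) * ((k.factorial : ℕ):ℝ)) *
            hermiteKdF M (n - (M+2)*k) (ξ t))
          ((k : ℝ) * ξ x (M+1) ^ (k-1) * ((((M+1:ℕ):ℝ)+2) * ξ x (M+1+1)) /
              (((n - (M+2)*k).factorial : ℕ) * ((k.factorial : ℕ):ℝ)) *
              hermiteKdF M (n - (M+2)*k) (ξ x)
            + ξ x (M+1) ^ k / (((n - (M+2)*k).factorial : ℕ) * ((k.factorial : ℕ):ℝ)) *
              (hermiteKdF M ((n - (M+2)*k) + 1) (ξ x) - ξ x 0 * hermiteKdF M (n - (M+2)*k) (ξ x)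
                + ((M:ℝ) + 2) * ξ x (M+1) * (((n - (M+2)*k).descFactorial (M+1) : ℕ) : ℝ) *
                  hermiteKdF M ((n - (M+2)*k) - (M+1)) (ξ x))) x :=
      fun k _ =>
        ((hD.pow k).div_const _).mul (ih ξ x (fun i hi => h i (Nat.le_succ_of_le hi)) (n - (M+2)*k))
    have hsum := (HasDerivAt.fun_sum hterm).const_mul ((n.factorial : ℕ) : ℝ)
    rw [step_algebra M n (ξ x)] at hsum
    simp only [hermiteKdF]
    exact hsum

lemma hermiteKdF_zero' (M : ℕ) (ξ : ℕ → ℝ) : hermiteKdF M 0 ξ = 1 := by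
  induction M with
  | zero => simp [hermiteKdF]
  | succ M ih => simp [hermiteKdF, ih]

theorem iteratedDeriv_exp_pow (m : ℕ) (hm : 1 ≤ m) (a x : ℝ) (n : ℕ) :
    iteratedDeriv n (fun t => Real.exp (a * t ^ m)) x =
      hermiteKdF (m - 1) n (fun i => a * (m.choose (i + 1) : ℝ) * x ^ (m - (i + 1))) *
        Real.exp (a * x ^ m) := by
  induction n generalizing x with
  | zero => simp [hermiteKdF_zero']
  | succ n ih =>
    rw [iteratedDeriv_succ]
    have hfun : iteratedDeriv n (fun t => Real.exp (a * t ^ m))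
        = fun y => hermiteKdF (m-1) n (fun i => a * (m.choose (i+1) : ℝ) * y ^ (m - (i+1))) *
            Real.exp (a * y ^ m) := funext fun y => ih y
    rw [hfun]
    have hderiv : ∀ i, i ≤ m - 1 → HasDerivAt
        (fun t => (fun t (i : ℕ) => a * (m.choose (i+1) : ℝ) * t ^ (m - (i+1))) t i)
        (((i:ℝ)+2) * ((fun t (i : ℕ) => a * (m.choose (i+1) : ℝ) * t ^ (m - (i+1))) x (i+1))) x := by
      intro i hi
      have hp := (hasDerivAt_pow (m - (i+1)) x).const_mul (a * (m.choose (i+1) : ℝ))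
      refine hp.congr_deriv (Eq.symm ?_)
      have he : m - (i+1) - 1 = m - (i+1+1) := by omega
      have hch : m.choose (i+1+1) * (i+1+1) = m.choose (i+1) * (m - (i+1)) :=
        Nat.choose_succ_right_eq m (i+1)
      have hc : ((m.choose (i+1+1) : ℕ) : ℝ) * (((i:ℝ))+2)
          = ((m.choose (i+1) : ℕ):ℝ) * (((m - (i+1) : ℕ)):ℝ) := by
        have : (((m.choose (i+1+1) * (i+1+1) : ℕ)) : ℝ) = ((m.choose (i+1) * (m - (i+1)) : ℕ) : ℝ) := by
          exact_mod_cast congrArg (Nat.cast : ℕ → ℝ) hch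
        push_cast at this
        linarith [this]
      rw [he]
      linear_combination (a * x ^ (m - (i+1+1))) * hc
    have hexp : HasDerivAt (fun t : ℝ => Real.exp (a * t ^ m))
        (Real.exp (a * x ^ m) * (a * ((m:ℝ) * x ^ (m-1)))) x :=
      ((hasDerivAt_pow m x).const_mul a).exp
    have hH := hermiteKdF_hasDerivAt (m-1)
      (fun t (i : ℕ) => a * (m.choose (i+1) : ℝ) * t ^ (m - (i+1))) x hderiv n
    have hmain := hH.fun_mul hexp
    rw [hmain.deriv]
    simp only [show m - 1 + 1 = m from by omega, Nat.choose_succ_self, Nat.cast_zero,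
      mul_zero, zero_mul, add_zero]
    rw [Nat.choose_one_right]
    ring
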